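/- arXiv:2009.11915 — 6 statements merged into one kernel-verified Lean document; each statement's English description precedes it below -/
import Mathlib

section
/- For every fixed t > 0 and y > 0, the spatial derivative ∂G/∂x(t,x,y) (which exists for all x < 0) converges, as x → 0⁻, to the limit ∂G/∂x(t,0⁻,y) = ((1+β)/(√(2πt)·√a₂))·(√a₂·√a₁·y/(a₁a₂t))·exp(−y²/(2a₂t)). -/
open Real Set Filter MeasureTheory

noncomputable def fPiece (a₁ a₂ y : ℝ) : ℝ :=
  if y ≤ 0 then y / Real.sqrt a₁ else y / Real.sqrt a₂

noncomputable def signFun (y : ℝ) : ℝ :=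
  if 0 < y then 1 else if y < 0 then -1 else 0

noncomputable def G (a₁ a₂ β t x y : ℝ) : ℝ :=
  (1 / Real.sqrt (2 * Real.pi * t)) *
    (if y ≤ 0 then 1 / Real.sqrt a₁ else 1 / Real.sqrt a₂) *
    (Real.exp (-(fPiece a₁ a₂ x - fPiece a₁ a₂ y) ^ 2 / (2 * t)) +
      β * signFun y * Real.exp (-(|fPiece a₁ a₂ x| + |fPiece a₁ a₂ y|) ^ 2 / (2 * t)))

theorem G_deriv_limit_left (a₁ a₂ ρ₁ ρ₂ α β : ℝ)
    (ha₁ : 0 < a₁) (ha₂ : 0 < a₂) (hρ₁ : 0 < ρ₁) (hρ₂ : 0 < ρ₂)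
    (hα : α = 1 - ρ₁ * a₁ / (ρ₂ * a₂))
    (hβ : β = (Real.sqrt a₁ + Real.sqrt a₂ * (α - 1)) /
      (Real.sqrt a₁ - Real.sqrt a₂ * (α - 1)))
    (t y : ℝ) (ht : 0 < t) (hy : 0 < y) :
    (∀ x < (0:ℝ), DifferentiableAt ℝ (fun ξ => G a₁ a₂ β t ξ y) x) ∧
    Filter.Tendsto (fun x => deriv (fun ξ => G a₁ a₂ β t ξ y) x)
      (nhdsWithin 0 (Set.Iio 0))
      (nhds ((1 + β) / (Real.sqrt (2 * Real.pi * t) * Real.sqrt a₂) *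
        (Real.sqrt a₂ * Real.sqrt a₁ * y / (a₁ * a₂ * t)) *
        Real.exp (-y ^ 2 / (2 * a₂ * t)))) := by
  set s1 := Real.sqrt a₁ with hs1
  set s2 := Real.sqrt a₂ with hs2
  have hs1pos : 0 < s1 := Real.sqrt_pos.mpr ha₁
  have hs2pos : 0 < s2 := Real.sqrt_pos.mpr ha₂
  have hs1sq : s1 ^ 2 = a₁ := Real.sq_sqrt ha₁.le
  have hs2sq : s2 ^ 2 = a₂ := Real.sq_sqrt ha₂.le
  set c : ℝ := (1 / Real.sqrt (2 * Real.pi * t)) * (1 / s2) * (1 + β) with hc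
  set g : ℝ → ℝ := fun x => c * Real.exp (-(x / s1 - y / s2) ^ 2 / (2 * t)) with hg
  -- G agrees with g for x ≤ 0
  have hGg : ∀ x ≤ (0:ℝ), G a₁ a₂ β t x y = g x := by
    intro x hx
    have hyn : ¬ y ≤ 0 := not_le.mpr hy
    simp only [G, fPiece, signFun, hg, if_pos hx, if_neg hyn, if_pos hy, ← hs1, ← hs2]
    have h1 : |x / s1| = -(x / s1) := abs_of_nonpos (div_nonpos_iff.mpr (Or.inr ⟨hx, hs1pos.le⟩))
    have h2 : |y / s2| = y / s2 := abs_of_pos (div_pos hy hs2pos)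
    rw [h1, h2]
    have : (-(x / s1) + y / s2) ^ 2 = (x / s1 - y / s2) ^ 2 := by ring
    rw [this]
    ring
  -- derivative of g
  have hderiv : ∀ x : ℝ, HasDerivAt g
      (c * (Real.exp (-(x / s1 - y / s2) ^ 2 / (2 * t)) *
        (-(2 * (x / s1 - y / s2) ^ 1 * (1 / s1)) / (2 * t)))) x := by
    intro x
    have h1 : HasDerivAt (fun x : ℝ => x / s1 - y / s2) (1 / s1) x := by
      simpa using ((hasDerivAt_id x).div_const s1).sub_const (y / s2)
    have h2 := h1.pow 2
    have h3 := (h2.neg).div_const (2 * t)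
    have h4 := h3.exp
    simpa [hg, mul_comm] using h4.const_mul c
  set D : ℝ → ℝ := fun x => c * (Real.exp (-(x / s1 - y / s2) ^ 2 / (2 * t)) *
    (-(2 * (x / s1 - y / s2) ^ 1 * (1 / s1)) / (2 * t))) with hD
  have hev : ∀ x < (0:ℝ), (fun ξ => G a₁ a₂ β t ξ y) =ᶠ[nhds x] g := by
    intro x hx
    filter_upwards [Iio_mem_nhds hx] with ξ hξ
    exact hGg ξ (le_of_lt hξ)
  have hdiff : ∀ x < (0:ℝ), DifferentiableAt ℝ (fun ξ => G a₁ a₂ β t ξ y) x := by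
    intro x hx
    exact ((hderiv x).differentiableAt).congr_of_eventuallyEq (hev x hx)
  refine ⟨hdiff, ?_⟩
  have hderivEq : ∀ x < (0:ℝ), deriv (fun ξ => G a₁ a₂ β t ξ y) x = D x := by
    intro x hx
    rw [Filter.EventuallyEq.deriv_eq (hev x hx), (hderiv x).deriv]
  have hDcont : Continuous D := by
    fun_prop
  have hval : D 0 = (1 + β) / (Real.sqrt (2 * Real.pi * t) * s2) *
      (s2 * s1 * y / (a₁ * a₂ * t)) * Real.exp (-y ^ 2 / (2 * a₂ * t)) := by
    have hexp : -((0:ℝ) / s1 - y / s2) ^ 2 / (2 * t) = -y ^ 2 / (2 * a₂ * t) := by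
      rw [← hs2sq]
      field_simp
      ring
    simp only [hD, hexp, hc]
    rw [← hs1sq, ← hs2sq]
    have hst : Real.sqrt (2 * Real.pi * t) ≠ 0 :=
      (Real.sqrt_pos.mpr (by positivity)).ne'
    generalize hS : Real.sqrt (2 * Real.pi * t) = S at hst ⊢
    field_simp
    ring
  have : Filter.Tendsto D (nhdsWithin 0 (Set.Iio 0)) (nhds (D 0)) :=
    (hDcont.continuousAt.tendsto).mono_left nhdsWithin_le_nhds
  rw [hval] at this
  refine this.congr' ?_
  filter_upwards [self_mem_nhdsWithin] with x hx
  exact (hderivEq x hx).symm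
end

section
/- For every t > 0 and every y ≠ 0, the one-sided limits ∂G/∂x(t,0⁻,y) = lim_{x→0⁻} ∂G/∂x(t,x,y) and ∂G/∂x(t,0⁺,y) = lim_{x→0⁺} ∂G/∂x(t,x,y) of the spatial derivative of G exist and satisfy the flux-matching relation a₁ρ₁·∂G/∂x(t,0⁻,y) − a₂ρ₂·∂G/∂x(t,0⁺,y) = 0. -/
open Real Set Filter MeasureTheory

lemma gaussDeriv (t b c : ℝ) (ht : t ≠ 0) (x : ℝ) :
    HasDerivAt (fun x : ℝ => Real.exp (-(x * b + c) ^ 2 / (2 * t)))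
      (t⁻¹ * (-(x * b + c) * b) * Real.exp (-(x * b + c) ^ 2 / (2 * t))) x := by
  have h1 : HasDerivAt (fun x : ℝ => x * b + c) b x := by
    simpa using ((hasDerivAt_id x).mul_const b).add_const c
  have h2 := ((h1.pow 2).neg).div_const (2 * t)
  have h3 : -((2:ℕ) * (x * b + c) ^ (2-1) * b) / (2 * t) = t⁻¹ * (-(x * b + c) * b) := by
    field_simp; ring
  rw [h3] at h2
  convert h2.exp using 1
  · rfl
  · show _ = Real.exp (-(x * b + c) ^ 2 / (2 * t)) * (t⁻¹ * (-(x * b + c) * b))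
    ring

lemma gaussCont (t b c : ℝ) :
    Continuous (fun x : ℝ => Real.exp (-(x * b + c) ^ 2 / (2 * t))) := by
  fun_prop


theorem G_flux_matching (a₁ a₂ ρ₁ ρ₂ α β : ℝ)
    (ha₁ : 0 < a₁) (ha₂ : 0 < a₂) (hρ₁ : 0 < ρ₁) (hρ₂ : 0 < ρ₂)
    (hα : α = 1 - ρ₁ * a₁ / (ρ₂ * a₂))
    (hβ : β = (Real.sqrt a₁ + Real.sqrt a₂ * (α - 1)) /
      (Real.sqrt a₁ - Real.sqrt a₂ * (α - 1)))
    (t y : ℝ) (ht : 0 < t) (hy : y ≠ 0) :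
    ∃ Lminus Lplus : ℝ,
      (∀ x : ℝ, x ≠ 0 → DifferentiableAt ℝ (fun ξ => G a₁ a₂ β t ξ y) x) ∧
      Filter.Tendsto (fun x => deriv (fun ξ => G a₁ a₂ β t ξ y) x)
        (nhdsWithin 0 (Set.Iio 0)) (nhds Lminus) ∧
      Filter.Tendsto (fun x => deriv (fun ξ => G a₁ a₂ β t ξ y) x)
        (nhdsWithin 0 (Set.Ioi 0)) (nhds Lplus) ∧
      a₁ * ρ₁ * Lminus - a₂ * ρ₂ * Lplus = 0 := by
  have hs1 : (0:ℝ) < Real.sqrt a₁ := Real.sqrt_pos.2 ha₁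
  have hs2 : (0:ℝ) < Real.sqrt a₂ := Real.sqrt_pos.2 ha₂
  set sa1 := Real.sqrt a₁ with hsa1
  set sa2 := Real.sqrt a₂ with hsa2
  have hq1 : sa1 ^ 2 = a₁ := Real.sq_sqrt ha₁.le
  have hq2 : sa2 ^ 2 = a₂ := Real.sq_sqrt ha₂.le
  set fy := fPiece a₁ a₂ y with hfy
  set F := |fy| with hF
  set s := signFun y with hs
  set c1 := 1 / Real.sqrt (2 * Real.pi * t) * (if y ≤ 0 then 1 / sa1 else 1 / sa2) with hc1
  -- the two smooth extensions
  set Hneg : ℝ → ℝ := fun x => c1 * (Real.exp (-(x * (1/sa1) + (-fy)) ^ 2 / (2 * t)) +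
      β * s * Real.exp (-(x * (-(1/sa1)) + F) ^ 2 / (2 * t))) with hHneg
  set Hpos : ℝ → ℝ := fun x => c1 * (Real.exp (-(x * (1/sa2) + (-fy)) ^ 2 / (2 * t)) +
      β * s * Real.exp (-(x * (1/sa2) + F) ^ 2 / (2 * t))) with hHpos
  set DHneg : ℝ → ℝ := fun x => c1 * ((t⁻¹ * (-(x * (1/sa1) + (-fy)) * (1/sa1))) *
        Real.exp (-(x * (1/sa1) + (-fy)) ^ 2 / (2 * t)) +
      β * s * ((t⁻¹ * (-(x * (-(1/sa1)) + F) * (-(1/sa1)))) *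
        Real.exp (-(x * (-(1/sa1)) + F) ^ 2 / (2 * t)))) with hDHneg
  set DHpos : ℝ → ℝ := fun x => c1 * ((t⁻¹ * (-(x * (1/sa2) + (-fy)) * (1/sa2))) *
        Real.exp (-(x * (1/sa2) + (-fy)) ^ 2 / (2 * t)) +
      β * s * ((t⁻¹ * (-(x * (1/sa2) + F) * (1/sa2))) *
        Real.exp (-(x * (1/sa2) + F) ^ 2 / (2 * t)))) with hDHpos
  have hDneg : ∀ x : ℝ, HasDerivAt Hneg (DHneg x) x := by
    intro x
    exact ((gaussDeriv t (1/sa1) (-fy) ht.ne' x).add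
      ((gaussDeriv t (-(1/sa1)) F ht.ne' x).const_mul (β * s))).const_mul c1
  have hDpos : ∀ x : ℝ, HasDerivAt Hpos (DHpos x) x := by
    intro x
    exact ((gaussDeriv t (1/sa2) (-fy) ht.ne' x).add
      ((gaussDeriv t (1/sa2) F ht.ne' x).const_mul (β * s))).const_mul c1
  have hCneg : Continuous DHneg := by
    rw [hDHneg]; fun_prop
  have hCpos : Continuous DHpos := by
    rw [hDHpos]; fun_prop
  -- equality on half lines
  have hEqNeg : ∀ x ∈ Iio (0:ℝ), G a₁ a₂ β t x y = Hneg x := by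
    intro x hx
    have hx' : x < 0 := hx
    rw [G, hHneg]
    rw [show fPiece a₁ a₂ x = x / sa1 from if_pos hx'.le]
    rw [show |x / sa1| = -x / sa1 by
      rw [abs_div, abs_of_nonpos hx'.le, abs_of_nonneg hs1.le]]
    rw [← hfy, ← hF, ← hs, ← hc1]
    have e1 : -(x / sa1 - fy) ^ 2 / (2 * t) = -(x * (1/sa1) + (-fy)) ^ 2 / (2 * t) := by ring
    have e2 : -(-x / sa1 + F) ^ 2 / (2 * t) = -(x * (-(1/sa1)) + F) ^ 2 / (2 * t) := by ring
    rw [e1, e2]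
  have hEqPos : ∀ x ∈ Ioi (0:ℝ), G a₁ a₂ β t x y = Hpos x := by
    intro x hx
    have hx' : (0:ℝ) < x := hx
    rw [G, hHpos]
    rw [show fPiece a₁ a₂ x = x / sa2 from if_neg (not_le.2 hx')]
    rw [show |x / sa2| = x / sa2 from abs_of_nonneg (div_nonneg hx'.le hs2.le)]
    rw [← hfy, ← hF, ← hs, ← hc1]
    have e1 : -(x / sa2 - fy) ^ 2 / (2 * t) = -(x * (1/sa2) + (-fy)) ^ 2 / (2 * t) := by ring
    rw [e1, div_eq_mul_one_div x sa2]
  have hevNeg : ∀ x : ℝ, x < 0 → (fun ξ => G a₁ a₂ β t ξ y) =ᶠ[nhds x] Hneg :=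
    fun x hx => Filter.eventuallyEq_of_mem (Iio_mem_nhds hx) hEqNeg
  have hevPos : ∀ x : ℝ, 0 < x → (fun ξ => G a₁ a₂ β t ξ y) =ᶠ[nhds x] Hpos :=
    fun x hx => Filter.eventuallyEq_of_mem (Ioi_mem_nhds hx) hEqPos
  refine ⟨DHneg 0, DHpos 0, ?_, ?_, ?_, ?_⟩
  · intro x hx
    rcases hx.lt_or_gt with hx | hx
    · exact (hDneg x).differentiableAt.congr_of_eventuallyEq (hevNeg x hx)
    · exact (hDpos x).differentiableAt.congr_of_eventuallyEq (hevPos x hx)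
  · have h0 : Tendsto DHneg (nhdsWithin 0 (Iio 0)) (nhds (DHneg 0)) :=
      (hCneg.tendsto 0).mono_left nhdsWithin_le_nhds
    refine h0.congr' ?_
    filter_upwards [self_mem_nhdsWithin] with x hx
    rw [← (hDneg x).deriv]
    exact ((hevNeg x hx).deriv_eq).symm
  · have h0 : Tendsto DHpos (nhdsWithin 0 (Ioi 0)) (nhds (DHpos 0)) :=
      (hCpos.tendsto 0).mono_left nhdsWithin_le_nhds
    refine h0.congr' ?_
    filter_upwards [self_mem_nhdsWithin] with x hx
    rw [← (hDpos x).deriv]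
    exact ((hevPos x hx).deriv_eq).symm
  · -- flux matching
    have hsF : s * F = fy := by
      rcases hy.lt_or_gt with hy' | hy'
      · have : s = -1 := by rw [hs, signFun, if_neg (not_lt.2 hy'.le), if_pos hy']
        have hfy' : fy = y / sa1 := by rw [hfy, fPiece, if_pos hy'.le]
        have : F = -fy := by
          rw [hF, abs_of_nonpos]
          rw [hfy']; exact div_nonpos_of_nonpos_of_nonneg hy'.le hs1.le
        rw [this, ‹s = -1›]; ring
      · have hs' : s = 1 := by rw [hs, signFun, if_pos hy']
        have hfy' : fy = y / sa2 := by rw [hfy, fPiece, if_neg (not_le.2 hy')]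
        have : F = fy := by
          rw [hF, abs_of_nonneg]
          rw [hfy']; exact div_nonneg hy'.le hs2.le
        rw [this, hs']; ring
    have hE : Real.exp (-((0:ℝ) * (-(1/sa1)) + F) ^ 2 / (2 * t)) =
        Real.exp (-((0:ℝ) * (1/sa1) + (-fy)) ^ 2 / (2 * t)) := by
      congr 1
      rw [show ((0:ℝ) * (-(1/sa1)) + F) ^ 2 = F ^ 2 by ring, hF, sq_abs]
      ring
    have hE2 : Real.exp (-((0:ℝ) * (1/sa2) + F) ^ 2 / (2 * t)) =
        Real.exp (-((0:ℝ) * (1/sa2) + (-fy)) ^ 2 / (2 * t)) := by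
      congr 1
      rw [show ((0:ℝ) * (1/sa2) + F) ^ 2 = F ^ 2 by ring, hF, sq_abs]
      ring
    have hEE : Real.exp (-((0:ℝ) * (1/sa2) + (-fy)) ^ 2 / (2 * t)) =
        Real.exp (-((0:ℝ) * (1/sa1) + (-fy)) ^ 2 / (2 * t)) := by
      congr 1; ring
    -- key algebraic identity
    have h1 : sa1 ≠ 0 := hs1.ne'
    have h2 : sa2 ≠ 0 := hs2.ne'
    have hρa : (ρ₂ * a₂ : ℝ) ≠ 0 := by positivity
    have hD : sa1 - sa2 * (α - 1) ≠ 0 := by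
      have h3 : 0 < sa2 * (ρ₁ * a₁ / (ρ₂ * a₂)) := by positivity
      rw [hα]; nlinarith
    have hβ1 : 1 + β = 2 * sa1 / (sa1 - sa2 * (α - 1)) := by
      rw [hβ]; field_simp; ring
    have hβ2 : 1 - β = 2 * sa2 * (-(α - 1)) / (sa1 - sa2 * (α - 1)) := by
      rw [hβ]; field_simp; ring
    have hcc : a₂ * ρ₂ * (-(α - 1)) = a₁ * ρ₁ := by
      rw [hα]; field_simp; ring
    have key : a₁ * ρ₁ * ((1/sa1) * (1 + β)) = a₂ * ρ₂ * ((1/sa2) * (1 - β)) := by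
      rw [hβ1, hβ2]
      field_simp
      linear_combination (-1 : ℝ) * hcc
    simp only [hDHneg, hDHpos]
    rw [hE, hE2, hEE]
    set E := Real.exp (-((0:ℝ) * (1/sa1) + (-fy)) ^ 2 / (2 * t)) with hEdef
    linear_combination (c1 * t⁻¹ * E * fy) * key +
      (c1 * t⁻¹ * E * β * (a₁ * ρ₁ * (1/sa1) + a₂ * ρ₂ * (1/sa2))) * hsF
end

section
/- For every y ≠ 0, for all t > 0 and all x > 0, the function G satisfies the heat equation with coefficient a₂/2 in the right half-line: ∂G/∂t(t,x,y) = (a₂/2)·∂²G/∂x²(t,x,y), where the derivatives are the usual partial derivatives of the explicit function (t,x) ↦ G(t,x,y) on (0,∞) × (0,∞). -/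
open Real Set Filter MeasureTheory

noncomputable def gker (s c t x : ℝ) : ℝ :=
  (1 / Real.sqrt (2 * Real.pi * t)) * Real.exp (-(x / s - c) ^ 2 / (2 * t))

lemma gker_hasDerivAt_x (s c t : ℝ) (hs : 0 < s) (ht : 0 < t) (x : ℝ) :
    HasDerivAt (fun ξ => gker s c t ξ)
      (-((x / s - c) / (s * t)) * gker s c t x) x := by
  have hu : HasDerivAt (fun ξ : ℝ => ξ / s - c) (1 / s) x := by
    simpa using ((hasDerivAt_id x).div_const s).sub_const c
  have hq : HasDerivAt (fun ξ : ℝ => -(ξ / s - c) ^ 2 / (2 * t))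
      (-(2 * (x / s - c) ^ 1 * (1 / s)) / (2 * t)) x := ((hu.pow 2).neg).div_const (2 * t)
  have he := hq.exp
  have := he.const_mul (1 / Real.sqrt (2 * Real.pi * t))
  refine this.congr_deriv ?_
  unfold gker
  field_simp

lemma gker_deriv_x (s c t : ℝ) (hs : 0 < s) (ht : 0 < t) :
    deriv (fun ξ => gker s c t ξ) =
      fun ξ => -((ξ / s - c) / (s * t)) * gker s c t ξ := by
  funext ξ
  exact (gker_hasDerivAt_x s c t hs ht ξ).deriv

lemma gker_hasDerivAt_xx (s c t : ℝ) (hs : 0 < s) (ht : 0 < t) (x : ℝ) :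
    HasDerivAt (deriv (fun ξ => gker s c t ξ))
      ((-1 / (s ^ 2 * t) + (x / s - c) ^ 2 / (s ^ 2 * t ^ 2)) * gker s c t x) x := by
  rw [gker_deriv_x s c t hs ht]
  have hu : HasDerivAt (fun ξ : ℝ => -((ξ / s - c) / (s * t))) (-(1 / s / (s * t))) x := by
    exact ((((hasDerivAt_id x).div_const s).sub_const c).div_const (s * t)).neg
  have := hu.mul (gker_hasDerivAt_x s c t hs ht x)
  refine this.congr_deriv ?_
  field_simp

lemma gker_hasDerivAt_t (s c t : ℝ) (hs : 0 < s) (ht : 0 < t) (x : ℝ) :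
    HasDerivAt (fun τ => gker s c τ x)
      ((-1 / (2 * t) + (x / s - c) ^ 2 / (2 * t ^ 2)) * gker s c t x) t := by
  have h2πt : 0 < 2 * Real.pi * t := by positivity
  have hst : Real.sqrt (2 * Real.pi * t) ≠ 0 := by positivity
  have hlin : HasDerivAt (fun τ : ℝ => 2 * Real.pi * τ) (2 * Real.pi) t := by
    simpa using (hasDerivAt_id t).const_mul (2 * Real.pi)
  have hsq : HasDerivAt (fun τ : ℝ => Real.sqrt (2 * Real.pi * τ))
      (1 / (2 * Real.sqrt (2 * Real.pi * t)) * (2 * Real.pi)) t :=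
    (Real.hasDerivAt_sqrt h2πt.ne').comp t hlin
  have hA : HasDerivAt (fun τ : ℝ => 1 / Real.sqrt (2 * Real.pi * τ))
      (-(1 / (2 * Real.sqrt (2 * Real.pi * t)) * (2 * Real.pi)) / (Real.sqrt (2 * Real.pi * t)) ^ 2) t := by
    rw [show (fun τ : ℝ => 1 / Real.sqrt (2 * Real.pi * τ)) = fun τ => (Real.sqrt (2 * Real.pi * τ))⁻¹ from funext fun τ => one_div _]
    exact hsq.inv hst
  have hden : HasDerivAt (fun τ : ℝ => 2 * τ) 2 t := by
    simpa using (hasDerivAt_id t).const_mul 2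
  have hq : HasDerivAt (fun τ : ℝ => -(x / s - c) ^ 2 / (2 * τ))
      ((0 * (2 * t) - (-(x / s - c) ^ 2) * 2) / (2 * t) ^ 2) t :=
    (hasDerivAt_const t (-(x / s - c) ^ 2)).div hden (by positivity)
  have hB := hq.exp
  have := hA.mul hB
  refine this.congr_deriv ?_
  unfold gker
  rw [Real.sq_sqrt h2πt.le]
  field_simp
  ring

theorem G_heat_equation_right (a₁ a₂ ρ₁ ρ₂ α β : ℝ)
    (ha₁ : 0 < a₁) (ha₂ : 0 < a₂) (hρ₁ : 0 < ρ₁) (hρ₂ : 0 < ρ₂)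
    (hα : α = 1 - ρ₁ * a₁ / (ρ₂ * a₂))
    (hβ : β = (Real.sqrt a₁ + Real.sqrt a₂ * (α - 1)) /
      (Real.sqrt a₁ - Real.sqrt a₂ * (α - 1)))
    (y : ℝ) (hy : y ≠ 0) (t : ℝ) (ht : 0 < t) (x : ℝ) (hx : 0 < x) :
    DifferentiableAt ℝ (fun τ => G a₁ a₂ β τ x y) t ∧
    DifferentiableAt ℝ (fun ξ => G a₁ a₂ β t ξ y) x ∧
    DifferentiableAt ℝ (deriv (fun ξ => G a₁ a₂ β t ξ y)) x ∧
    deriv (fun τ => G a₁ a₂ β τ x y) t =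
      (a₂ / 2) * deriv (deriv (fun ξ => G a₁ a₂ β t ξ y)) x := by
  set s := Real.sqrt a₂ with hs_def
  have hs : 0 < s := Real.sqrt_pos.mpr ha₂
  set c := fPiece a₁ a₂ y with hc_def
  set d := |fPiece a₁ a₂ y| with hd_def
  set A := (if y ≤ 0 then 1 / Real.sqrt a₁ else 1 / Real.sqrt a₂) with hA_def
  set K := β * signFun y with hK_def
  -- key identity on the right half line
  have key : ∀ τ : ℝ, ∀ ξ : ℝ, 0 < ξ →
      G a₁ a₂ β τ ξ y = A * (gker s c τ ξ + K * gker s (-d) τ ξ) := by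
    intro τ ξ hξ
    have hfξ : fPiece a₁ a₂ ξ = ξ / s := by
      rw [fPiece, if_neg (not_le.mpr hξ)]
    have habs : |fPiece a₁ a₂ ξ| = ξ / s := by
      rw [hfξ]; exact abs_of_pos (div_pos hξ hs)
    have hsq : (-(ξ / s + d) ^ 2 : ℝ) = -(ξ / s - -d) ^ 2 := by ring
    rw [G, gker, gker, habs, hfξ, hsq, ← hA_def, ← hK_def]
    ring
  have keyt : (fun τ => G a₁ a₂ β τ x y) =
      fun τ => A * (gker s c τ x + K * gker s (-d) τ x) :=
    funext fun τ => key τ x hx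
  have keyx : (fun ξ => G a₁ a₂ β t ξ y) =ᶠ[nhds x]
      fun ξ => A * (gker s c t ξ + K * gker s (-d) t ξ) := by
    filter_upwards [IsOpen.mem_nhds isOpen_Ioi hx] with ξ hξ
    exact key t ξ hξ
  -- derivative in t
  have hDt : HasDerivAt (fun τ => A * (gker s c τ x + K * gker s (-d) τ x))
      (A * ((-1 / (2 * t) + (x / s - c) ^ 2 / (2 * t ^ 2)) * gker s c t x +
        K * ((-1 / (2 * t) + (x / s - -d) ^ 2 / (2 * t ^ 2)) * gker s (-d) t x))) t :=
    ((gker_hasDerivAt_t s c t hs ht x).add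
      ((gker_hasDerivAt_t s (-d) t hs ht x).const_mul K)).const_mul A
  -- first derivative in x, as a function
  have hDx : ∀ ξ : ℝ, HasDerivAt (fun ξ => A * (gker s c t ξ + K * gker s (-d) t ξ))
      (A * (-((ξ / s - c) / (s * t)) * gker s c t ξ +
        K * (-((ξ / s - -d) / (s * t)) * gker s (-d) t ξ))) ξ := fun ξ =>
    ((gker_hasDerivAt_x s c t hs ht ξ).add
      ((gker_hasDerivAt_x s (-d) t hs ht ξ).const_mul K)).const_mul A
  have hderiv1 : deriv (fun ξ => A * (gker s c t ξ + K * gker s (-d) t ξ)) =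
      fun ξ => A * (deriv (fun ξ => gker s c t ξ) ξ + K * deriv (fun ξ => gker s (-d) t ξ) ξ) := by
    funext ξ
    rw [(hDx ξ).deriv, (gker_hasDerivAt_x s c t hs ht ξ).deriv,
      (gker_hasDerivAt_x s (-d) t hs ht ξ).deriv]
  -- second derivative in x
  have hDxx : HasDerivAt (deriv (fun ξ => A * (gker s c t ξ + K * gker s (-d) t ξ)))
      (A * ((-1 / (s ^ 2 * t) + (x / s - c) ^ 2 / (s ^ 2 * t ^ 2)) * gker s c t x +
        K * ((-1 / (s ^ 2 * t) + (x / s - -d) ^ 2 / (s ^ 2 * t ^ 2)) * gker s (-d) t x))) x := by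
    rw [hderiv1]
    exact ((gker_hasDerivAt_xx s c t hs ht x).add
      ((gker_hasDerivAt_xx s (-d) t hs ht x).const_mul K)).const_mul A
  -- transfer to G
  have hG_t : HasDerivAt (fun τ => G a₁ a₂ β τ x y)
      (A * ((-1 / (2 * t) + (x / s - c) ^ 2 / (2 * t ^ 2)) * gker s c t x +
        K * ((-1 / (2 * t) + (x / s - -d) ^ 2 / (2 * t ^ 2)) * gker s (-d) t x))) t := by
    rw [keyt]; exact hDt
  have hG_x : DifferentiableAt ℝ (fun ξ => G a₁ a₂ β t ξ y) x :=
    (hDx x).differentiableAt.congr_of_eventuallyEq keyx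
  have hderiv_eq : deriv (fun ξ => G a₁ a₂ β t ξ y) =ᶠ[nhds x]
      deriv (fun ξ => A * (gker s c t ξ + K * gker s (-d) t ξ)) :=
    keyx.deriv
  have hG_xx : HasDerivAt (deriv (fun ξ => G a₁ a₂ β t ξ y))
      (A * ((-1 / (s ^ 2 * t) + (x / s - c) ^ 2 / (s ^ 2 * t ^ 2)) * gker s c t x +
        K * ((-1 / (s ^ 2 * t) + (x / s - -d) ^ 2 / (s ^ 2 * t ^ 2)) * gker s (-d) t x))) x :=
    hDxx.congr_of_eventuallyEq hderiv_eq
  refine ⟨hG_t.differentiableAt, hG_x, hG_xx.differentiableAt, ?_⟩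
  rw [hG_t.deriv, hG_xx.deriv]
  have hs2 : s ^ 2 = a₂ := Real.sq_sqrt ha₂.le
  rw [← hs2]
  have hsne : s ≠ 0 := hs.ne'
  have htne : t ≠ 0 := ht.ne'
  field_simp
end

section
/- For every y ≠ 0, for all t > 0 and all x < 0, the function G satisfies the heat equation with coefficient a₁/2 in the left half-line: ∂G/∂t(t,x,y) = (a₁/2)·∂²G/∂x²(t,x,y), where the derivatives are the usual partial derivatives of the explicit function (t,x) ↦ G(t,x,y) on (0,∞) × (−∞,0). -/
open Real Set Filter MeasureTheory

lemma heat_time (u t : ℝ) (ht : 0 < t) :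
    HasDerivAt (fun τ => Real.exp (-u ^ 2 / (2 * τ)) / Real.sqrt (2 * Real.pi * τ))
      (Real.exp (-u ^ 2 / (2 * t)) / Real.sqrt (2 * Real.pi * t) *
        (u ^ 2 / (2 * t ^ 2) - 1 / (2 * t))) t := by
  have h2πt : 0 < 2 * Real.pi * t := by positivity
  have hS : Real.sqrt (2 * Real.pi * t) ≠ 0 := (Real.sqrt_pos.2 h2πt).ne'
  have h1 : HasDerivAt (fun τ : ℝ => -u ^ 2 / (2 * τ)) (u ^ 2 / (2 * t ^ 2)) t := by
    have h := (hasDerivAt_inv ht.ne').const_mul (-u ^ 2 / 2)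
    have hfun : (fun τ : ℝ => -u ^ 2 / 2 * τ⁻¹) = fun τ : ℝ => -u ^ 2 / (2 * τ) := by
      funext τ; ring
    rw [hfun] at h
    refine h.congr_deriv ?_
    field_simp
  have hexp := h1.exp
  have hlin : HasDerivAt (fun τ : ℝ => 2 * Real.pi * τ) (2 * Real.pi) t := by
    simpa using (hasDerivAt_id t).const_mul (2 * Real.pi)
  have hsqrt : HasDerivAt (fun τ : ℝ => Real.sqrt (2 * Real.pi * τ))
      (2 * Real.pi / (2 * Real.sqrt (2 * Real.pi * t))) t := by
    have := (Real.hasDerivAt_sqrt h2πt.ne').comp t hlin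
    refine this.congr_deriv ?_
    ring
  have hinv := hsqrt.inv hS
  have hmul : HasDerivAt (fun τ : ℝ => Real.exp (-u ^ 2 / (2 * τ)) * (Real.sqrt (2 * Real.pi * τ))⁻¹) _ t := hexp.mul hinv
  have hfun2 : (fun τ : ℝ => Real.exp (-u ^ 2 / (2 * τ)) * (Real.sqrt (2 * Real.pi * τ))⁻¹)
      = fun τ => Real.exp (-u ^ 2 / (2 * τ)) / Real.sqrt (2 * Real.pi * τ) := by
    funext τ; exact (div_eq_mul_inv _ _).symm
  rw [hfun2] at hmul
  refine hmul.congr_deriv ?_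
  have hsq : Real.sqrt (2 * Real.pi * t) ^ 2 = 2 * Real.pi * t := Real.sq_sqrt h2πt.le
  rw [hsq]
  generalize Real.sqrt (2 * Real.pi * t) = S at hS ⊢
  have hπ : Real.pi ≠ 0 := Real.pi_ne_zero
  field_simp
  ring

lemma heat_space (s m t : ℝ) (hs : s ≠ 0) (ht : 0 < t) (x : ℝ) :
    HasDerivAt (fun ξ => Real.exp (-(ξ / s - m) ^ 2 / (2 * t)) / Real.sqrt (2 * Real.pi * t))
      (Real.exp (-(x / s - m) ^ 2 / (2 * t)) / Real.sqrt (2 * Real.pi * t) *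
        (-(x / s - m) / (t * s))) x := by
  have h0 : HasDerivAt (fun ξ : ℝ => ξ / s - m) (1 / s) x := by
    simpa using ((hasDerivAt_id x).div_const s).sub_const m
  have h1 : HasDerivAt (fun ξ : ℝ => -(1 / (2 * t)) * (ξ / s - m) ^ 2)
      (-(1 / (2 * t)) * (2 * (x / s - m) * (1 / s))) x := by
    exact ((h0.pow 2).const_mul _).congr_deriv (by push_cast; ring)
  have h2 := (h1.exp).div_const (Real.sqrt (2 * Real.pi * t))
  have hfun : (fun ξ : ℝ => Real.exp (-(1 / (2 * t)) * (ξ / s - m) ^ 2) / Real.sqrt (2 * Real.pi * t))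
      = fun ξ => Real.exp (-(ξ / s - m) ^ 2 / (2 * t)) / Real.sqrt (2 * Real.pi * t) := by
    funext ξ; rw [show -(1 / (2 * t)) * (ξ / s - m) ^ 2 = -(ξ / s - m) ^ 2 / (2 * t) by ring]
  rw [hfun] at h2
  refine h2.congr_deriv ?_
  rw [show -(1 / (2 * t)) * (x / s - m) ^ 2 = -(x / s - m) ^ 2 / (2 * t) by ring]
  field_simp

lemma heat_space2 (s m t : ℝ) (hs : s ≠ 0) (ht : 0 < t) (x : ℝ) :
    HasDerivAt (fun ξ => Real.exp (-(ξ / s - m) ^ 2 / (2 * t)) / Real.sqrt (2 * Real.pi * t) *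
        (-(ξ / s - m) / (t * s)))
      (Real.exp (-(x / s - m) ^ 2 / (2 * t)) / Real.sqrt (2 * Real.pi * t) *
        ((x / s - m) ^ 2 / (t ^ 2 * s ^ 2) - 1 / (t * s ^ 2))) x := by
  have h0 : HasDerivAt (fun ξ : ℝ => -(ξ / s - m) / (t * s)) (-(1 / s) / (t * s)) x := by
    have : HasDerivAt (fun ξ : ℝ => ξ / s - m) (1 / s) x := by
      simpa using ((hasDerivAt_id x).div_const s).sub_const m
    simpa using (this.neg).div_const (t * s)
  have h1 := (heat_space s m t hs ht x).mul h0
  refine h1.congr_deriv ?_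
  field_simp
  ring


theorem G_heat_equation_left (a₁ a₂ ρ₁ ρ₂ α β : ℝ)
    (ha₁ : 0 < a₁) (ha₂ : 0 < a₂) (hρ₁ : 0 < ρ₁) (hρ₂ : 0 < ρ₂)
    (hα : α = 1 - ρ₁ * a₁ / (ρ₂ * a₂))
    (hβ : β = (Real.sqrt a₁ + Real.sqrt a₂ * (α - 1)) /
      (Real.sqrt a₁ - Real.sqrt a₂ * (α - 1)))
    (y : ℝ) (hy : y ≠ 0) (t : ℝ) (ht : 0 < t) (x : ℝ) (hx : x < 0) :
    DifferentiableAt ℝ (fun τ => G a₁ a₂ β τ x y) t ∧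
    DifferentiableAt ℝ (fun ξ => G a₁ a₂ β t ξ y) x ∧
    DifferentiableAt ℝ (deriv (fun ξ => G a₁ a₂ β t ξ y)) x ∧
    deriv (fun τ => G a₁ a₂ β τ x y) t =
      (a₁ / 2) * deriv (deriv (fun ξ => G a₁ a₂ β t ξ y)) x := by
  set s : ℝ := Real.sqrt a₁ with hs_def
  have hs : 0 < s := Real.sqrt_pos.2 ha₁
  set c : ℝ := fPiece a₁ a₂ y with hc_def
  set m : ℝ := |fPiece a₁ a₂ y| with hm_def
  set A : ℝ := if y ≤ 0 then 1 / Real.sqrt a₁ else 1 / Real.sqrt a₂ with hA_def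
  set q : ℝ := β * signFun y with hq_def
  set F : ℝ → ℝ → ℝ := fun τ ξ =>
    A * (Real.exp (-(ξ / s - c) ^ 2 / (2 * τ)) / Real.sqrt (2 * Real.pi * τ)) +
    A * q * (Real.exp (-(ξ / s - m) ^ 2 / (2 * τ)) / Real.sqrt (2 * Real.pi * τ)) with hF_def
  -- G agrees with F for ξ ≤ 0
  have hGF : ∀ τ ξ : ℝ, ξ ≤ 0 → G a₁ a₂ β τ ξ y = F τ ξ := by
    intro τ ξ hξ
    have h1 : fPiece a₁ a₂ ξ = ξ / s := if_pos hξ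
    have h2 : |ξ / s| = -(ξ / s) := abs_of_nonpos (div_nonpos_of_nonpos_of_nonneg hξ hs.le)
    simp only [G, hF_def, h1, ← hc_def, ← hm_def, ← hA_def]
    rw [h2, show (-(ξ / s) + m) ^ 2 = (ξ / s - m) ^ 2 by ring]
    ring
  -- time derivative
  have htime : HasDerivAt (fun τ => F τ x)
      (A * (Real.exp (-(x / s - c) ^ 2 / (2 * t)) / Real.sqrt (2 * Real.pi * t) *
          ((x / s - c) ^ 2 / (2 * t ^ 2) - 1 / (2 * t))) +
       A * q * (Real.exp (-(x / s - m) ^ 2 / (2 * t)) / Real.sqrt (2 * Real.pi * t) *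
          ((x / s - m) ^ 2 / (2 * t ^ 2) - 1 / (2 * t)))) t :=
    ((heat_time (x / s - c) t ht).const_mul A).add ((heat_time (x / s - m) t ht).const_mul (A * q))
  -- space first derivative, at every point
  have hspace : ∀ z : ℝ, HasDerivAt (fun ξ => F t ξ)
      (A * (Real.exp (-(z / s - c) ^ 2 / (2 * t)) / Real.sqrt (2 * Real.pi * t) *
          (-(z / s - c) / (t * s))) +
       A * q * (Real.exp (-(z / s - m) ^ 2 / (2 * t)) / Real.sqrt (2 * Real.pi * t) *
          (-(z / s - m) / (t * s)))) z := fun z =>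
    ((heat_space s c t hs.ne' ht z).const_mul A).add
      ((heat_space s m t hs.ne' ht z).const_mul (A * q))
  have hderivF : deriv (fun ξ => F t ξ) = fun z =>
      A * (Real.exp (-(z / s - c) ^ 2 / (2 * t)) / Real.sqrt (2 * Real.pi * t) *
          (-(z / s - c) / (t * s))) +
      A * q * (Real.exp (-(z / s - m) ^ 2 / (2 * t)) / Real.sqrt (2 * Real.pi * t) *
          (-(z / s - m) / (t * s))) := funext fun z => (hspace z).deriv
  -- space second derivative
  have hspace2 : HasDerivAt (deriv (fun ξ => F t ξ))
      (A * (Real.exp (-(x / s - c) ^ 2 / (2 * t)) / Real.sqrt (2 * Real.pi * t) *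
          ((x / s - c) ^ 2 / (t ^ 2 * s ^ 2) - 1 / (t * s ^ 2))) +
       A * q * (Real.exp (-(x / s - m) ^ 2 / (2 * t)) / Real.sqrt (2 * Real.pi * t) *
          ((x / s - m) ^ 2 / (t ^ 2 * s ^ 2) - 1 / (t * s ^ 2)))) x := by
    rw [hderivF]
    exact ((heat_space2 s c t hs.ne' ht x).const_mul A).add
      ((heat_space2 s m t hs.ne' ht x).const_mul (A * q))
  -- eventual equalities
  have hmem : Iio (0 : ℝ) ∈ nhds x := Iio_mem_nhds hx
  have hEq : (fun ξ => G a₁ a₂ β t ξ y) =ᶠ[nhds x] fun ξ => F t ξ :=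
    eventually_of_mem hmem fun z hz => hGF t z (le_of_lt hz)
  have htfun : (fun τ => G a₁ a₂ β τ x y) = fun τ => F τ x :=
    funext fun τ => hGF τ x hx.le
  have hderivEq : deriv (fun ξ => G a₁ a₂ β t ξ y) =ᶠ[nhds x] deriv (fun ξ => F t ξ) :=
    eventually_of_mem hmem fun z hz =>
      Filter.EventuallyEq.deriv_eq
        (eventually_of_mem (Iio_mem_nhds hz) fun w hw => hGF t w (le_of_lt hw))
  refine ⟨?_, ?_, ?_, ?_⟩
  · rw [htfun]; exact htime.differentiableAt
  · exact hEq.differentiableAt_iff.2 (hspace x).differentiableAt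
  · exact hderivEq.differentiableAt_iff.2 hspace2.differentiableAt
  · rw [htfun, htime.deriv, hderivEq.deriv_eq, hspace2.deriv]
    have hsq : s ^ 2 = a₁ := Real.sq_sqrt ha₁.le
    rw [← hsq]
    field_simp
end

section
/- There exists a constant C > 0, depending only on a₁, a₂, ρ₁ and ρ₂, such that for every t > 0 and every x ∈ ℝ, the Lebesgue integral over the second spatial variable satisfies ∫_ℝ |G(t,x,y)| dy ≤ C. -/
open Real Set Filter MeasureTheory

noncomputable def gaussAux (t a c y : ℝ) : ℝ :=
  Real.exp (-(c - y / Real.sqrt a) ^ 2 / (2 * t))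

lemma intG (t a c : ℝ) (ht : 0 < t) (ha : 0 < a) :
    Integrable (fun y : ℝ => gaussAux t a c y) := by
  have h0 : (0:ℝ) < 1 / (2 * t) := by positivity
  have h1 := (integrable_exp_neg_mul_sq h0).comp_sub_right c
  have h2 := h1.comp_div (R := Real.sqrt a) (by positivity)
  refine h2.congr (Filter.Eventually.of_forall fun y => ?_)
  unfold gaussAux
  ring_nf

lemma valG (t a c : ℝ) (ht : 0 < t) (ha : 0 < a) :
    ∫ y : ℝ, gaussAux t a c y = Real.sqrt a * Real.sqrt (2 * Real.pi * t) := by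
  have hcomp : (∫ y : ℝ, gaussAux t a c y)
      = ∫ y : ℝ, (fun u : ℝ => Real.exp (-(u - c) ^ 2 / (2 * t))) (y / Real.sqrt a) := by
    congr 1; ext y; unfold gaussAux; ring_nf
  rw [hcomp, MeasureTheory.Measure.integral_comp_div
      (fun u : ℝ => Real.exp (-(u - c) ^ 2 / (2 * t))) (Real.sqrt a)]
  rw [integral_sub_right_eq_self (μ := volume) (fun u : ℝ => Real.exp (-u ^ 2 / (2 * t))) c]
  have : (∫ u : ℝ, Real.exp (-u ^ 2 / (2 * t)))
      = ∫ u : ℝ, Real.exp (-(1 / (2 * t)) * u ^ 2) := by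
    congr 1; ext u; ring_nf
  rw [this, integral_gaussian]
  rw [abs_of_nonneg (Real.sqrt_nonneg a), smul_eq_mul]
  rw [div_div_eq_mul_div, div_one]
  congr 1
  ring

lemma signFun_abs_le (y : ℝ) : |signFun y| ≤ 1 := by
  unfold signFun
  split_ifs <;> simp

lemma ptBound (a₁ a₂ β t x y : ℝ) (ha₁ : 0 < a₁) (ha₂ : 0 < a₂) (ht : 0 < t) :
    |G a₁ a₂ β t x y| ≤ (1 / Real.sqrt (2 * Real.pi * t)) * (1 + |β|) *
      ((1 / Real.sqrt a₁) * (gaussAux t a₁ (fPiece a₁ a₂ x) y + gaussAux t a₁ 0 y) +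
       (1 / Real.sqrt a₂) * (gaussAux t a₂ (fPiece a₁ a₂ x) y + gaussAux t a₂ 0 y)) := by
  set c := fPiece a₁ a₂ x with hc
  have hA : (0:ℝ) ≤ 1 / Real.sqrt (2 * Real.pi * t) := by positivity
  have hs := signFun_abs_le y
  by_cases hy : y ≤ 0
  · have hfy : fPiece a₁ a₂ y = y / Real.sqrt a₁ := if_pos hy
    have hw : (0:ℝ) ≤ 1 / Real.sqrt a₁ := by positivity
    set E1 := Real.exp (-(c - y / Real.sqrt a₁) ^ 2 / (2 * t)) with hE1
    set E2 := Real.exp (-(|c| + |y / Real.sqrt a₁|) ^ 2 / (2 * t)) with hE2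
    set E2' := Real.exp (-(0 - y / Real.sqrt a₁) ^ 2 / (2 * t)) with hE2'
    have hE2le : E2 ≤ E2' := by
      rw [hE2, hE2']
      apply Real.exp_le_exp.2
      apply div_le_div_of_nonneg_right ?_ (by positivity)
      have : (0 - y / Real.sqrt a₁) ^ 2 ≤ (|c| + |y / Real.sqrt a₁|) ^ 2 := by
        nlinarith [abs_nonneg c, abs_nonneg (y / Real.sqrt a₁), sq_abs (y / Real.sqrt a₁),
          abs_nonneg (y / Real.sqrt a₁)]
      linarith
    have hGval : G a₁ a₂ β t x y = (1 / Real.sqrt (2 * Real.pi * t)) * (1 / Real.sqrt a₁) *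
        (E1 + β * signFun y * E2) := by
      unfold G
      rw [if_pos hy, hfy, ← hc, hE1, hE2]
    have key : |E1 + β * signFun y * E2| ≤ (1 + |β|) * (E1 + E2') := by
      calc |E1 + β * signFun y * E2| ≤ |E1| + |β * signFun y * E2| := abs_add_le _ _
        _ = E1 + |β| * |signFun y| * E2 := by
            rw [abs_mul, abs_mul, abs_of_pos (Real.exp_pos _), abs_of_pos (Real.exp_pos _)]
        _ ≤ E1 + |β| * 1 * E2' := by
            gcongr
        _ ≤ (1 + |β|) * (E1 + E2') := by
            nlinarith [Real.exp_pos (-(c - y / Real.sqrt a₁) ^ 2 / (2 * t)),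
              Real.exp_pos (-(0 - y / Real.sqrt a₁) ^ 2 / (2 * t)), abs_nonneg β]
    have hR : (0:ℝ) ≤ (1 / Real.sqrt a₂) * (gaussAux t a₂ c y + gaussAux t a₂ 0 y) := by
      unfold gaussAux; positivity
    have hE1g : gaussAux t a₁ c y = E1 := rfl
    have hE2g : gaussAux t a₁ 0 y = E2' := rfl
    rw [hGval, abs_mul, abs_mul, abs_of_nonneg hA, abs_of_nonneg hw, hE1g, hE2g]
    calc 1 / Real.sqrt (2 * Real.pi * t) * (1 / Real.sqrt a₁) * |E1 + β * signFun y * E2|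
        ≤ 1 / Real.sqrt (2 * Real.pi * t) * (1 / Real.sqrt a₁) * ((1 + |β|) * (E1 + E2')) := by
          apply mul_le_mul_of_nonneg_left key (by positivity)
      _ = 1 / Real.sqrt (2 * Real.pi * t) * (1 + |β|) *
            (1 / Real.sqrt a₁ * (E1 + E2')) := by ring
      _ ≤ 1 / Real.sqrt (2 * Real.pi * t) * (1 + |β|) *
          (1 / Real.sqrt a₁ * (E1 + E2') +
            (1 / Real.sqrt a₂) * (gaussAux t a₂ c y + gaussAux t a₂ 0 y)) := by
          exact mul_le_mul_of_nonneg_left (le_add_of_nonneg_right hR) (by positivity)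
  · have hfy : fPiece a₁ a₂ y = y / Real.sqrt a₂ := if_neg hy
    have hw : (0:ℝ) ≤ 1 / Real.sqrt a₂ := by positivity
    set E1 := Real.exp (-(c - y / Real.sqrt a₂) ^ 2 / (2 * t)) with hE1
    set E2 := Real.exp (-(|c| + |y / Real.sqrt a₂|) ^ 2 / (2 * t)) with hE2
    set E2' := Real.exp (-(0 - y / Real.sqrt a₂) ^ 2 / (2 * t)) with hE2'
    have hE2le : E2 ≤ E2' := by
      rw [hE2, hE2']
      apply Real.exp_le_exp.2
      apply div_le_div_of_nonneg_right ?_ (by positivity)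
      have : (0 - y / Real.sqrt a₂) ^ 2 ≤ (|c| + |y / Real.sqrt a₂|) ^ 2 := by
        nlinarith [abs_nonneg c, abs_nonneg (y / Real.sqrt a₂), sq_abs (y / Real.sqrt a₂),
          abs_nonneg (y / Real.sqrt a₂)]
      linarith
    have hGval : G a₁ a₂ β t x y = (1 / Real.sqrt (2 * Real.pi * t)) * (1 / Real.sqrt a₂) *
        (E1 + β * signFun y * E2) := by
      unfold G
      rw [if_neg hy, hfy, ← hc, hE1, hE2]
    have key : |E1 + β * signFun y * E2| ≤ (1 + |β|) * (E1 + E2') := by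
      calc |E1 + β * signFun y * E2| ≤ |E1| + |β * signFun y * E2| := abs_add_le _ _
        _ = E1 + |β| * |signFun y| * E2 := by
            rw [abs_mul, abs_mul, abs_of_pos (Real.exp_pos _), abs_of_pos (Real.exp_pos _)]
        _ ≤ E1 + |β| * 1 * E2' := by
            gcongr
        _ ≤ (1 + |β|) * (E1 + E2') := by
            nlinarith [Real.exp_pos (-(c - y / Real.sqrt a₂) ^ 2 / (2 * t)),
              Real.exp_pos (-(0 - y / Real.sqrt a₂) ^ 2 / (2 * t)), abs_nonneg β]
    have hR : (0:ℝ) ≤ (1 / Real.sqrt a₁) * (gaussAux t a₁ c y + gaussAux t a₁ 0 y) := by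
      unfold gaussAux; positivity
    have hE1g : gaussAux t a₂ c y = E1 := rfl
    have hE2g : gaussAux t a₂ 0 y = E2' := rfl
    rw [hGval, abs_mul, abs_mul, abs_of_nonneg hA, abs_of_nonneg hw, hE1g, hE2g]
    calc 1 / Real.sqrt (2 * Real.pi * t) * (1 / Real.sqrt a₂) * |E1 + β * signFun y * E2|
        ≤ 1 / Real.sqrt (2 * Real.pi * t) * (1 / Real.sqrt a₂) * ((1 + |β|) * (E1 + E2')) := by
          apply mul_le_mul_of_nonneg_left key (by positivity)
      _ = 1 / Real.sqrt (2 * Real.pi * t) * (1 + |β|) *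
            (1 / Real.sqrt a₂ * (E1 + E2')) := by ring
      _ ≤ 1 / Real.sqrt (2 * Real.pi * t) * (1 + |β|) *
          (1 / Real.sqrt a₁ * (gaussAux t a₁ c y + gaussAux t a₁ 0 y) +
            1 / Real.sqrt a₂ * (E1 + E2')) := by
          exact mul_le_mul_of_nonneg_left (le_add_of_nonneg_left hR) (by positivity)

theorem G_integral_bound_in_y (a₁ a₂ ρ₁ ρ₂ α β : ℝ)
    (ha₁ : 0 < a₁) (ha₂ : 0 < a₂) (hρ₁ : 0 < ρ₁) (hρ₂ : 0 < ρ₂)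
    (hα : α = 1 - ρ₁ * a₁ / (ρ₂ * a₂))
    (hβ : β = (Real.sqrt a₁ + Real.sqrt a₂ * (α - 1)) /
      (Real.sqrt a₁ - Real.sqrt a₂ * (α - 1))) :
    ∃ C : ℝ, 0 < C ∧ ∀ t > (0:ℝ), ∀ x : ℝ,
      (∫ y : ℝ, |G a₁ a₂ β t x y|) ≤ C := by
  refine ⟨4 * (1 + |β|), by positivity, fun t ht x => ?_⟩
  set c := fPiece a₁ a₂ x with hc
  set S := Real.sqrt (2 * Real.pi * t) with hS
  have hSpos : 0 < S := Real.sqrt_pos.2 (by positivity)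
  have hs1 : (0:ℝ) < Real.sqrt a₁ := Real.sqrt_pos.2 ha₁
  have hs2 : (0:ℝ) < Real.sqrt a₂ := Real.sqrt_pos.2 ha₂
  have hint1 := intG t a₁ c ht ha₁
  have hint1' := intG t a₁ 0 ht ha₁
  have hint2 := intG t a₂ c ht ha₂
  have hint2' := intG t a₂ 0 ht ha₂
  set g : ℝ → ℝ := fun y => (1 / S) * (1 + |β|) *
      ((1 / Real.sqrt a₁) * (gaussAux t a₁ c y + gaussAux t a₁ 0 y) +
       (1 / Real.sqrt a₂) * (gaussAux t a₂ c y + gaussAux t a₂ 0 y)) with hg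
  have hintg : Integrable g := by
    apply Integrable.const_mul
    exact ((hint1.add hint1').const_mul _).add ((hint2.add hint2').const_mul _)
  have hI1 : Integrable (fun y : ℝ => (1 / Real.sqrt a₁) *
      (gaussAux t a₁ c y + gaussAux t a₁ 0 y)) := (hint1.add hint1').const_mul _
  have hI2 : Integrable (fun y : ℝ => (1 / Real.sqrt a₂) *
      (gaussAux t a₂ c y + gaussAux t a₂ 0 y)) := (hint2.add hint2').const_mul _
  have hA1 : Integrable (fun y : ℝ => gaussAux t a₁ c y + gaussAux t a₁ 0 y) :=
    hint1.add hint1'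
  have hA2 : Integrable (fun y : ℝ => gaussAux t a₂ c y + gaussAux t a₂ 0 y) :=
    hint2.add hint2'
  have hintval : (∫ y : ℝ, g y) = 4 * (1 + |β|) := by
    rw [hg]
    rw [integral_const_mul]
    rw [integral_add hI1 hI2]
    rw [integral_const_mul, integral_const_mul]
    rw [integral_add hint1 hint1', integral_add hint2 hint2']
    rw [valG t a₁ c ht ha₁, valG t a₁ 0 ht ha₁, valG t a₂ c ht ha₂, valG t a₂ 0 ht ha₂]
    rw [← hS]
    field_simp
    ring
  calc (∫ y : ℝ, |G a₁ a₂ β t x y|) ≤ ∫ y : ℝ, g y := by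
        apply integral_mono_of_nonneg (ae_of_all _ fun y => abs_nonneg _) hintg
        exact ae_of_all _ fun y => ptBound a₁ a₂ β t x y ha₁ ha₂ ht
    _ = 4 * (1 + |β|) := hintval
end

section
/- There exists a constant C > 0, depending only on a₁, a₂, ρ₁ and ρ₂, such that for every t > 0 and every y ∈ ℝ, the Lebesgue integral over the first spatial variable satisfies ∫_ℝ |G(t,x,y)| dx ≤ C. -/
open Real Set Filter MeasureTheory

lemma gauss_rw (s t m : ℝ) (hs : 0 < s) (ht : 0 < t) :
    (fun x : ℝ => Real.exp (-(x / s - m) ^ 2 / (2 * t)))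
      = fun x : ℝ => Real.exp (-(1 / (2 * t * s ^ 2)) * (x - s * m) ^ 2) := by
  funext x
  rw [Real.exp_eq_exp]
  have h : x / s - m = (x - s * m) / s := by field_simp
  rw [h, div_pow]
  ring

lemma gauss_integrable (s t m : ℝ) (hs : 0 < s) (ht : 0 < t) :
    Integrable (fun x : ℝ => Real.exp (-(x / s - m) ^ 2 / (2 * t))) := by
  rw [gauss_rw s t m hs ht]
  have hb : 0 < 1 / (2 * t * s ^ 2) := by positivity
  exact (integrable_exp_neg_mul_sq hb).comp_sub_right (s * m)

lemma gauss_integral (s t m : ℝ) (hs : 0 < s) (ht : 0 < t) :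
    ∫ x : ℝ, Real.exp (-(x / s - m) ^ 2 / (2 * t)) = s * Real.sqrt (2 * Real.pi * t) := by
  rw [gauss_rw s t m hs ht]
  have hb : 0 < 1 / (2 * t * s ^ 2) := by positivity
  rw [show (fun x : ℝ => Real.exp (-(1 / (2 * t * s ^ 2)) * (x - s * m) ^ 2))
      = fun x : ℝ => (fun u : ℝ => Real.exp (-(1 / (2 * t * s ^ 2)) * u ^ 2)) (x - s * m) from rfl]
  rw [integral_sub_right_eq_self (fun u : ℝ => Real.exp (-(1 / (2 * t * s ^ 2)) * u ^ 2)) (s * m)]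
  rw [integral_gaussian]
  have h : Real.pi / (1 / (2 * t * s ^ 2)) = (2 * Real.pi * t) * s ^ 2 := by
    field_simp
  rw [h, Real.sqrt_mul (by positivity), Real.sqrt_sq hs.le]
  ring

theorem G_integral_bound_in_x (a₁ a₂ ρ₁ ρ₂ α β : ℝ)
    (ha₁ : 0 < a₁) (ha₂ : 0 < a₂) (hρ₁ : 0 < ρ₁) (hρ₂ : 0 < ρ₂)
    (hα : α = 1 - ρ₁ * a₁ / (ρ₂ * a₂))
    (hβ : β = (Real.sqrt a₁ + Real.sqrt a₂ * (α - 1)) /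
      (Real.sqrt a₁ - Real.sqrt a₂ * (α - 1))) :
    ∃ C : ℝ, 0 < C ∧ ∀ t > (0:ℝ), ∀ y : ℝ,
      (∫ x : ℝ, |G a₁ a₂ β t x y|) ≤ C := by
  have hs1 : 0 < Real.sqrt a₁ := Real.sqrt_pos.mpr ha₁
  have hs2 : 0 < Real.sqrt a₂ := Real.sqrt_pos.mpr ha₂
  set k : ℝ := 1 / Real.sqrt a₁ + 1 / Real.sqrt a₂ with hk
  have hkpos : 0 < k := by positivity
  refine ⟨2 * k * (1 + |β|) * (Real.sqrt a₁ + Real.sqrt a₂), by positivity, ?_⟩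
  intro t ht y
  set μ : ℝ := fPiece a₁ a₂ y with hμ
  set ν : ℝ := |μ| with hν
  set c : ℝ := (1 / Real.sqrt (2 * Real.pi * t)) * k * (1 + |β|) with hc
  have hcpos : 0 < c := by positivity
  set g : ℝ → ℝ := fun x =>
    Real.exp (-(x / Real.sqrt a₁ - μ) ^ 2 / (2 * t)) +
    Real.exp (-(x / Real.sqrt a₂ - μ) ^ 2 / (2 * t)) +
    Real.exp (-(x / Real.sqrt a₁ - ν) ^ 2 / (2 * t)) +
    Real.exp (-(x / Real.sqrt a₂ - (-ν)) ^ 2 / (2 * t)) with hg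
  have hgint : Integrable g :=
    (((gauss_integrable _ t μ hs1 ht).add (gauss_integrable _ t μ hs2 ht)).add
      (gauss_integrable _ t ν hs1 ht)).add (gauss_integrable _ t (-ν) hs2 ht)
  have hbound : ∀ x : ℝ, |G a₁ a₂ β t x y| ≤ c * g x := by
    intro x
    have hE1 : Real.exp (-(fPiece a₁ a₂ x - μ) ^ 2 / (2 * t)) ≤
        Real.exp (-(x / Real.sqrt a₁ - μ) ^ 2 / (2 * t)) +
        Real.exp (-(x / Real.sqrt a₂ - μ) ^ 2 / (2 * t)) := by
      by_cases hx : x ≤ 0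
      · simp only [fPiece, if_pos hx]
        linarith [(Real.exp_pos (-(x / Real.sqrt a₂ - μ) ^ 2 / (2 * t))).le]
      · simp only [fPiece, if_neg hx]
        linarith [(Real.exp_pos (-(x / Real.sqrt a₁ - μ) ^ 2 / (2 * t))).le]
    have hE2 : Real.exp (-(|fPiece a₁ a₂ x| + ν) ^ 2 / (2 * t)) ≤
        Real.exp (-(x / Real.sqrt a₁ - ν) ^ 2 / (2 * t)) +
        Real.exp (-(x / Real.sqrt a₂ - (-ν)) ^ 2 / (2 * t)) := by
      by_cases hx : x ≤ 0
      · have habs : |fPiece a₁ a₂ x| = -(x / Real.sqrt a₁) := by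
          simp only [fPiece, if_pos hx]
          exact abs_of_nonpos (div_nonpos_of_nonpos_of_nonneg hx hs1.le)
        rw [habs, show (-(x / Real.sqrt a₁) + ν) ^ 2 = (x / Real.sqrt a₁ - ν) ^ 2 by ring]
        linarith [(Real.exp_pos (-(x / Real.sqrt a₂ - (-ν)) ^ 2 / (2 * t))).le]
      · have habs : |fPiece a₁ a₂ x| = x / Real.sqrt a₂ := by
          simp only [fPiece, if_neg hx]
          exact abs_of_nonneg (div_nonneg (le_of_lt (lt_of_not_ge hx)) hs2.le)
        rw [habs, show (x / Real.sqrt a₂ + ν) ^ 2 = (x / Real.sqrt a₂ - (-ν)) ^ 2 by ring]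
        linarith [(Real.exp_pos (-(x / Real.sqrt a₁ - ν) ^ 2 / (2 * t))).le]
    set E1 := Real.exp (-(fPiece a₁ a₂ x - μ) ^ 2 / (2 * t)) with hE1d
    set E2 := Real.exp (-(|fPiece a₁ a₂ x| + ν) ^ 2 / (2 * t)) with hE2d
    have hA : (0:ℝ) ≤ 1 / Real.sqrt (2 * Real.pi * t) := by positivity
    have h1p : (0:ℝ) ≤ 1 / Real.sqrt a₁ := by positivity
    have h2p : (0:ℝ) ≤ 1 / Real.sqrt a₂ := by positivity
    have hw : (0:ℝ) ≤ (if y ≤ 0 then 1 / Real.sqrt a₁ else 1 / Real.sqrt a₂) ∧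
        (if y ≤ 0 then 1 / Real.sqrt a₁ else 1 / Real.sqrt a₂) ≤ k := by
      constructor
      · split_ifs <;> assumption
      · split_ifs <;> simp only [hk] <;> linarith
    have hsgn : |signFun y| ≤ 1 := by
      unfold signFun; split_ifs <;> simp
    have hS : |E1 + β * signFun y * E2| ≤ E1 + |β| * E2 := by
      calc |E1 + β * signFun y * E2| ≤ |E1| + |β * signFun y * E2| := abs_add_le _ _
        _ = E1 + |β| * |signFun y| * E2 := by
            rw [abs_of_pos (Real.exp_pos _), abs_mul, abs_mul,
              abs_of_pos (Real.exp_pos _)]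
        _ ≤ E1 + |β| * 1 * E2 := by
            have hE2pos : (0:ℝ) ≤ E2 := by rw [hE2d]; exact (Real.exp_pos _).le
            have ha : |β| * |signFun y| ≤ |β| * 1 :=
              mul_le_mul_of_nonneg_left hsgn (abs_nonneg β)
            have hb : |β| * |signFun y| * E2 ≤ |β| * 1 * E2 :=
              mul_le_mul_of_nonneg_right ha hE2pos
            linarith
        _ = E1 + |β| * E2 := by ring
    have hgsum : E1 + |β| * E2 ≤ (1 + |β|) * g x := by
      have p1 := (Real.exp_pos (-(x / Real.sqrt a₁ - μ) ^ 2 / (2 * t))).le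
      have p2 := (Real.exp_pos (-(x / Real.sqrt a₂ - μ) ^ 2 / (2 * t))).le
      have p3 := (Real.exp_pos (-(x / Real.sqrt a₁ - ν) ^ 2 / (2 * t))).le
      have p4 := (Real.exp_pos (-(x / Real.sqrt a₂ - (-ν)) ^ 2 / (2 * t))).le
      have hb0 := abs_nonneg β
      have hsum1 : E1 ≤ g x := by simp only [hg]; linarith
      have hsum2 : E2 ≤ g x := by simp only [hg]; linarith
      have hmul : |β| * E2 ≤ |β| * g x := mul_le_mul_of_nonneg_left hsum2 hb0
      have hexp : (1 + |β|) * g x = g x + |β| * g x := by ring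
      rw [hexp]
      linarith
    calc |G a₁ a₂ β t x y|
        = (1 / Real.sqrt (2 * Real.pi * t)) *
            (if y ≤ 0 then 1 / Real.sqrt a₁ else 1 / Real.sqrt a₂) *
            |E1 + β * signFun y * E2| := by
          simp only [G, ← hμ, ← hν, ← hE1d, ← hE2d]
          rw [abs_mul, abs_mul, abs_of_nonneg hA, abs_of_nonneg hw.1]
      _ ≤ (1 / Real.sqrt (2 * Real.pi * t)) * k * (E1 + |β| * E2) := by
          apply mul_le_mul
          · exact mul_le_mul_of_nonneg_left hw.2 hA
          · exact hS
          · exact abs_nonneg _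
          · positivity
      _ ≤ (1 / Real.sqrt (2 * Real.pi * t)) * k * ((1 + |β|) * g x) := by
          apply mul_le_mul_of_nonneg_left hgsum (by positivity)
      _ = c * g x := by rw [hc]; ring
  have hmono : (∫ x : ℝ, |G a₁ a₂ β t x y|) ≤ ∫ x : ℝ, c * g x := by
    refine integral_mono_of_nonneg (Eventually.of_forall fun x => abs_nonneg _)
      (hgint.const_mul c) (Eventually.of_forall hbound)
  have hgval : (∫ x : ℝ, g x) = 2 * (Real.sqrt a₁ + Real.sqrt a₂) * Real.sqrt (2 * Real.pi * t) := by
    simp only [hg]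
    have i1 := gauss_integrable (Real.sqrt a₁) t μ hs1 ht
    have i2 := gauss_integrable (Real.sqrt a₂) t μ hs2 ht
    have i3 := gauss_integrable (Real.sqrt a₁) t ν hs1 ht
    have i4 := gauss_integrable (Real.sqrt a₂) t (-ν) hs2 ht
    have i12 : Integrable (fun x : ℝ => Real.exp (-(x / Real.sqrt a₁ - μ) ^ 2 / (2 * t)) +
        Real.exp (-(x / Real.sqrt a₂ - μ) ^ 2 / (2 * t))) := i1.add i2
    have i123 : Integrable (fun x : ℝ => (Real.exp (-(x / Real.sqrt a₁ - μ) ^ 2 / (2 * t)) +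
        Real.exp (-(x / Real.sqrt a₂ - μ) ^ 2 / (2 * t))) +
        Real.exp (-(x / Real.sqrt a₁ - ν) ^ 2 / (2 * t))) := i12.add i3
    rw [integral_add i123 i4, integral_add i12 i3, integral_add i1 i2,
      gauss_integral _ t μ hs1 ht, gauss_integral _ t μ hs2 ht,
      gauss_integral _ t ν hs1 ht, gauss_integral _ t (-ν) hs2 ht]
    ring
  have hsne : Real.sqrt (2 * Real.pi * t) ≠ 0 := by positivity
  calc (∫ x : ℝ, |G a₁ a₂ β t x y|) ≤ ∫ x : ℝ, c * g x := hmono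
    _ = c * ∫ x : ℝ, g x := integral_const_mul c g
    _ = 2 * k * (1 + |β|) * (Real.sqrt a₁ + Real.sqrt a₂) := by
        rw [hgval, hc]; field_simp
end
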